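/- Let A be a commutative unital ring and B a left noetherian associative unital A-algebra satisfying condition (E): for every simple left B[X]-module M, the endomorphism φ(m) = X·m is integral over A. Then B is a Jacobson ring: every semiprime two-sided ideal I of B (i.e., every two-sided ideal equal to the intersection of the prime two-sided ideals containing it) is an intersection of primitive ideals of B. -/

import Mathlib

open Polynomial

/-- A two-sided ideal `P` of `B` is prime if `P ≠ B` and for all two-sided ideals
`J₁, J₂` with `J₁J₂ ⊆ P` one has `J₁ ⊆ P` or `J₂ ⊆ P`. -/
def TwoSidedIdeal.IsPrimeIdeal {B : Type} [Ring B] (P : TwoSidedIdeal B) : Prop :=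
  P ≠ ⊤ ∧ ∀ J₁ J₂ : TwoSidedIdeal B,
    (∀ a ∈ J₁, ∀ b ∈ J₂, a * b ∈ P) → J₁ ≤ P ∨ J₂ ≤ P

/-- A two-sided ideal is semiprime if it equals the intersection of the prime
two-sided ideals containing it. -/
def TwoSidedIdeal.IsSemiprimeIdeal {B : Type} [Ring B] (I : TwoSidedIdeal B) : Prop :=
  I = sInf {P : TwoSidedIdeal B | P.IsPrimeIdeal ∧ I ≤ P}

/-- A two-sided ideal is primitive if it is the annihilator of some simple
left `B`-module. -/
def TwoSidedIdeal.IsPrimitiveIdeal {B : Type} [Ring B] (P : TwoSidedIdeal B) : Prop :=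
  ∃ (M : Type) (_ : AddCommGroup M) (_ : Module B M), IsSimpleModule B M ∧
    ∀ a : B, a ∈ P ↔ ∀ m : M, a • m = 0

namespace JacobsonCondE

variable {B : Type} [Ring B]

private lemma arpow (a r : B) : ∀ m : ℕ, (a * r) ^ (m + 1) = a * ((r * a) ^ m * r)
  | 0 => by simp
  | m + 1 => by
    rw [pow_succ, arpow a r m, pow_succ]
    simp only [mul_assoc]

private lemma step1 [IsNoetherianRing B] (P K : TwoSidedIdeal B)
    (hP : P ≠ ⊤ ∧ ∀ J₁ J₂ : TwoSidedIdeal B,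
      (∀ a ∈ J₁, ∀ b ∈ J₂, a * b ∈ P) → J₁ ≤ P ∨ J₂ ≤ P)
    (b : B) (hbK : b ∈ K) (hbP : b ∉ P) :
    ∃ a, a ∈ K ∧ ∀ k : ℕ, a ^ (k + 1) ∉ P := by
  classical
  by_contra hcon
  push_neg at hcon
  let ℓ : B → Submodule B B := fun x =>
    { carrier := {z | z * x ∈ P}
      add_mem' := fun {y z} hy hz => by
        simpa [add_mul] using P.add_mem hy hz
      zero_mem' := by simpa using P.zero_mem
      smul_mem' := fun c z hz => by
        simpa [smul_eq_mul, mul_assoc] using P.mul_mem_left c _ hz }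
  have hmem : ∀ x z : B, z ∈ ℓ x ↔ z * x ∈ P := fun _ _ => Iff.rfl
  have hS : ({L | ∃ x, (x ∈ K ∧ x ∉ P) ∧ ℓ x = L} : Set (Submodule B B)).Nonempty :=
    ⟨ℓ b, b, ⟨hbK, hbP⟩, rfl⟩
  obtain ⟨L, ⟨a, ⟨haK, haP⟩, rfl⟩, hmax⟩ :=
    set_has_maximal_iff_noetherian.mpr (inferInstance : IsNoetherian B B) _ hS
  have key : ∀ r, a * r * a ∈ P := by
    intro r
    by_cases hc : a * r ∈ P
    · exact P.mul_mem_right _ _ hc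
    · have hcK : a * r ∈ K := K.mul_mem_right _ _ haK
      obtain ⟨k0, hk0⟩ := hcon _ hcK
      have hex : ∃ k, (a * r) ^ (k + 1) ∈ P := ⟨k0, hk0⟩
      have hkP : (a * r) ^ (Nat.find hex + 1) ∈ P := Nat.find_spec hex
      have hkpos : Nat.find hex ≠ 0 := by
        intro h0
        rw [h0, zero_add, pow_one] at hkP
        exact hc hkP
      obtain ⟨k', hk'⟩ := Nat.exists_eq_succ_of_ne_zero hkpos
      have hyP : (a * r) ^ (k' + 1) ∉ P := Nat.find_min hex (by omega)
      have hyK : (a * r) ^ (k' + 1) ∈ K := by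
        rw [pow_succ]
        exact K.mul_mem_left _ _ hcK
      have hle : ℓ a ≤ ℓ ((a * r) ^ (k' + 1)) := by
        intro z hz
        rw [hmem] at hz ⊢
        rw [arpow, ← mul_assoc]
        exact P.mul_mem_right _ _ hz
      have heq : ℓ ((a * r) ^ (k' + 1)) = ℓ a := by
        by_contra hne
        exact hmax _ ⟨_, ⟨hyK, hyP⟩, rfl⟩ (lt_of_le_of_ne hle (Ne.symm hne))
      have hmem2 : a * r ∈ ℓ ((a * r) ^ (k' + 1)) := by
        rw [hmem, ← pow_succ']
        rw [hk'] at hkP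
        exact hkP
      rw [heq, hmem] at hmem2
      exact hmem2
  set s : Set B := {w | ∃ x y, w = x * a * y} with hs
  have hmulL : ∀ (x : B) {y : B}, y ∈ AddSubgroup.closure s → x * y ∈ AddSubgroup.closure s := by
    intro x y hy
    induction hy using AddSubgroup.closure_induction with
    | mem w hw =>
      obtain ⟨u, v, rfl⟩ := hw
      exact AddSubgroup.subset_closure ⟨x * u, v, by simp [mul_assoc]⟩
    | zero => simpa using AddSubgroup.zero_mem _
    | add w₁ w₂ _ _ g1 g2 => simpa [mul_add] using AddSubgroup.add_mem _ g1 g2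
    | neg w _ g => simpa [mul_neg] using AddSubgroup.neg_mem _ g
  have hmulR : ∀ (x : B) {y : B}, y ∈ AddSubgroup.closure s → y * x ∈ AddSubgroup.closure s := by
    intro x y hy
    induction hy using AddSubgroup.closure_induction with
    | mem w hw =>
      obtain ⟨u, v, rfl⟩ := hw
      exact AddSubgroup.subset_closure ⟨u, v * x, by simp [mul_assoc]⟩
    | zero => simpa using AddSubgroup.zero_mem _
    | add w₁ w₂ _ _ g1 g2 => simpa [add_mul] using AddSubgroup.add_mem _ g1 g2
    | neg w _ g => simpa [neg_mul] using AddSubgroup.neg_mem _ g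
  let J : TwoSidedIdeal B := TwoSidedIdeal.mk' (AddSubgroup.closure s)
    (AddSubgroup.zero_mem _) (fun hx hy => AddSubgroup.add_mem _ hx hy)
    (fun hx => AddSubgroup.neg_mem _ hx)
    (fun {x y} hy => hmulL x hy) (fun {x y} hx => hmulR y hx)
  have hmemJ : ∀ x : B, x ∈ J ↔ x ∈ AddSubgroup.closure s := fun x =>
    TwoSidedIdeal.mem_mk' _ _ _ _ _ _ x
  have h1 : ∀ x y : B, ∀ v ∈ AddSubgroup.closure s, x * a * y * v ∈ P := by
    intro x y v hv
    induction hv using AddSubgroup.closure_induction with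
    | mem w hw =>
      obtain ⟨u, t, rfl⟩ := hw
      have hmem3 : x * (a * (y * u) * a * t) ∈ P :=
        P.mul_mem_left x _ (P.mul_mem_right _ t (key (y * u)))
      simpa only [mul_assoc] using hmem3
    | zero => simpa using P.zero_mem
    | add w₁ w₂ _ _ g1 g2 => simpa [mul_add] using P.add_mem g1 g2
    | neg w _ g => simpa [mul_neg] using P.neg_mem g
  have h2 : ∀ u ∈ AddSubgroup.closure s, ∀ v ∈ AddSubgroup.closure s, u * v ∈ P := by
    intro u hu
    induction hu using AddSubgroup.closure_induction with
    | mem w hw =>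
      intro v hv
      obtain ⟨x, y, rfl⟩ := hw
      exact h1 x y v hv
    | zero => intro v hv; simpa using P.zero_mem
    | add w₁ w₂ _ _ g1 g2 => intro v hv; simpa [add_mul] using P.add_mem (g1 v hv) (g2 v hv)
    | neg w _ g => intro v hv; simpa [neg_mul] using P.neg_mem (g v hv)
  have hJP : J ≤ P := by
    rcases hP.2 J J (fun u hu v hv => h2 u ((hmemJ u).1 hu) v ((hmemJ v).1 hv)) with h | h
    · exact h
    · exact h
  exact haP (hJP ((hmemJ a).2 (AddSubgroup.subset_closure ⟨1, 1, by simp⟩)))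


private lemma step2 {A B : Type} [CommRing A] [Ring B] [Algebra A B] [IsNoetherianRing B]
    (hE : ∀ (M : Type) [AddCommGroup M] [Module (Polynomial B) M],
      IsSimpleModule (Polynomial B) M →
      ∃ n : ℕ, 1 ≤ n ∧ ∃ z : Fin n → A, ∀ m : M,
        ((X : Polynomial B) ^ n
          + ∑ i : Fin n, C (algebraMap A B (z i)) * X ^ (i : ℕ)) • m = 0)
    (P : TwoSidedIdeal B) (a : B)
    (hpow : ∀ k : ℕ, a ^ (k + 1) ∉ P)
    (hprim : ∀ Q : TwoSidedIdeal B, Q.IsPrimitiveIdeal → P ≤ Q → a ∈ Q) : False := by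
  classical
  -- `PT`: polynomials all of whose coefficients lie in `P`, a left ideal of `B[X]`
  let PT : Ideal (Polynomial B) :=
    { carrier := {f | ∀ j, f.coeff j ∈ P}
      add_mem' := fun {f g} hf hg j => by
        simpa [coeff_add] using P.add_mem (hf j) (hg j)
      zero_mem' := fun j => by simpa using P.zero_mem
      smul_mem' := fun g f hf => by
        intro j
        rw [smul_eq_mul, coeff_mul]
        exact sum_mem fun p hp => P.mul_mem_left _ _ (hf p.2) }
  let v : Polynomial B := X * C a - 1
  let N₀ : Ideal (Polynomial B) := PT ⊔ Submodule.span (Polynomial B) {v}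
  have hone : (1 : Polynomial B) ∉ N₀ := by
    intro hmem1
    obtain ⟨p, hp, w, hw, hpw⟩ := Submodule.mem_sup.1 hmem1
    obtain ⟨g, rfl⟩ := Submodule.mem_span_singleton.1 hw
    have hgv : g • v = g * X * C a - g := by
      show g * (X * C a - 1) = _
      rw [mul_sub, mul_one, ← mul_assoc]
    have hpeq : p = 1 - (g * X * C a - g) := by
      rw [← hgv]; exact eq_sub_of_add_eq hpw
    have hp' : ∀ j, ((1 : Polynomial B) - (g * X * C a - g)).coeff j ∈ P := by
      intro j; have := hp j; rwa [hpeq] at this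
    have hc : ∀ j, g.coeff j + a ^ j ∈ P := by
      intro j
      induction j with
      | zero =>
        have h0 := hp' 0
        simp only [coeff_sub, coeff_one, coeff_mul_C, coeff_mul_X_zero, if_pos rfl,
          zero_mul, zero_sub, sub_neg_eq_add] at h0
        simpa [pow_zero, add_comm] using h0
      | succ j ih =>
        have h1 := hp' (j + 1)
        simp only [coeff_sub, coeff_one, coeff_mul_C, coeff_mul_X] at h1
        have h1' : g.coeff (j + 1) - g.coeff j * a ∈ P := by
          simpa [neg_sub] using h1
        have h2 : (g.coeff j + a ^ j) * a ∈ P := P.mul_mem_right _ _ ih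
        have h3 := P.add_mem h1' h2
        have hEq : g.coeff (j + 1) - g.coeff j * a + (g.coeff j + a ^ j) * a
            = g.coeff (j + 1) + a ^ (j + 1) := by
          rw [add_mul, pow_succ]
          abel
        rwa [hEq] at h3
    have := hc (g.natDegree + 1)
    rw [coeff_natDegree_succ_eq_zero, zero_add] at this
    exact hpow _ this
  obtain ⟨N, hNmax, hN₀N⟩ := Ideal.exists_le_maximal N₀ (fun h => hone (h ▸ Submodule.mem_top))
  haveI hsimple : IsSimpleModule (Polynomial B) (Polynomial B ⧸ N) :=
    isSimpleModule_iff_isCoatom.2 (Ideal.isMaximal_def.1 hNmax)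
  obtain ⟨n, hn1, z, hz⟩ := hE (Polynomial B ⧸ N) hsimple
  set m₀ : Polynomial B ⧸ N := Submodule.Quotient.mk 1 with hm₀
  have hmk : ∀ f : Polynomial B, (Submodule.Quotient.mk f : Polynomial B ⧸ N) = f • m₀ := by
    intro f
    rw [hm₀, ← Submodule.Quotient.mk_smul, smul_eq_mul, mul_one]
  have hbc : ∀ (b : B) (m : Polynomial B ⧸ N), b • m = (C b : Polynomial B) • m := by
    intro b m
    conv_lhs => rw [← one_smul (Polynomial B) m, ← smul_assoc]
    congr 1
    rw [smul_eq_C_mul, mul_one]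
  have hPkill : ∀ p ∈ P, ∀ m : Polynomial B ⧸ N, p • m = 0 := by
    intro p hp m
    obtain ⟨f, rfl⟩ := Submodule.Quotient.mk_surjective N m
    rw [← Submodule.Quotient.mk_smul, smul_eq_C_mul, Submodule.Quotient.mk_eq_zero]
    refine hN₀N (Submodule.mem_sup_left ?_)
    intro j
    rw [coeff_C_mul]
    exact P.mul_mem_right _ _ hp
  have hXa : ∀ k : ℕ, ((X * C a : Polynomial B) ^ k) • m₀ = m₀ := by
    have h0 : (X * C a : Polynomial B) • m₀ = m₀ := by
      rw [← hmk (X * C a), hm₀]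
      exact (Submodule.Quotient.eq N).2
        (hN₀N (Submodule.mem_sup_right (Submodule.subset_span rfl)))
    intro k
    induction k with
    | zero => simp
    | succ k ih => rw [pow_succ, mul_smul, h0, ih]
  -- commutation helpers
  have hsw : ∀ (u w : Polynomial B), Commute u w → ∀ m : Polynomial B ⧸ N,
      u • w • m = w • u • m := by
    intro u w h m
    rw [← mul_smul, ← mul_smul, h.eq]
  have hCaX : ∀ (k l : ℕ), Commute ((C a : Polynomial B) ^ k) ((X : Polynomial B) ^ l) :=
    fun k l => (commute_X_pow ((C a : Polynomial B) ^ k) l).symm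
  have hXCa_pow : ∀ k : ℕ, ((X : Polynomial B) * C a) ^ k = X ^ k * (C a) ^ k :=
    fun k => (commute_X (C a : Polynomial B)).mul_pow k
  -- the key integrality relation applied at (C a)^n • (X^i • m₀)
  have claimB : ∀ i : ℕ, (X : Polynomial B) ^ i • m₀
      = - ∑ j : Fin n, (algebraMap A B (z j) * a ^ (n - (j : ℕ)))
          • ((X : Polynomial B) ^ i • m₀) := by
    intro i
    have h := hz (((C a : Polynomial B) ^ n) • ((X : Polynomial B) ^ i • m₀))
    rw [add_smul, Finset.sum_smul] at h
    have hhead : (X : Polynomial B) ^ n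
        • (((C a : Polynomial B) ^ n) • ((X : Polynomial B) ^ i • m₀))
        = (X : Polynomial B) ^ i • m₀ := by
      rw [hsw _ _ (hCaX n i) m₀,
        hsw ((X : Polynomial B) ^ n) ((X : Polynomial B) ^ i)
          (commute_X_pow ((X : Polynomial B) ^ i) n) _]
      congr 1
      rw [← mul_smul, ← hXCa_pow, hXa n]
    have hterm : ∀ j : Fin n, (C (algebraMap A B (z j)) * X ^ (j : ℕ))
        • (((C a : Polynomial B) ^ n) • ((X : Polynomial B) ^ i • m₀))
        = (algebraMap A B (z j) * a ^ (n - (j : ℕ))) • ((X : Polynomial B) ^ i • m₀) := by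
      intro j
      have hj : (j : ℕ) ≤ n := le_of_lt j.isLt
      have hsplitCa : ((C a : Polynomial B) ^ n)
          = (C a : Polynomial B) ^ (n - (j : ℕ)) * (C a : Polynomial B) ^ (j : ℕ) := by
        rw [← pow_add]
        congr 1
        omega
      rw [mul_smul, hsw _ _ (hCaX n i) m₀, hsplitCa, mul_smul,
        hsw ((X : Polynomial B) ^ i) _ (hCaX (n - (j : ℕ)) i).symm _,
        hsw ((X : Polynomial B) ^ (j : ℕ)) _ (hCaX (n - (j : ℕ)) (j : ℕ)).symm _,
        hsw ((X : Polynomial B) ^ (j : ℕ)) ((X : Polynomial B) ^ i)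
          (commute_X_pow ((X : Polynomial B) ^ i) (j : ℕ)) _]
      have hXCaj : (X : Polynomial B) ^ (j : ℕ) • ((C a : Polynomial B) ^ (j : ℕ)) • m₀
          = m₀ := by
        rw [← mul_smul, ← hXCa_pow, hXa]
      rw [hXCaj, ← mul_smul, ← mul_smul, ← C_pow, ← C_mul, mul_smul, ← hbc]
    rw [hhead, Finset.sum_congr rfl (fun j _ => hterm j)] at h
    exact eq_neg_of_add_eq_zero_left h
  -- M is spanned over B by X^i • m₀ for i < n
  have hgenspan : ∀ k : ℕ, (X : Polynomial B) ^ k • m₀ ∈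
      Submodule.span B (Set.range fun i : Fin n => (X : Polynomial B) ^ (i : ℕ) • m₀) := by
    intro k
    induction k using Nat.strong_induction_on with
    | _ k ih =>
      by_cases hk : k < n
      · exact Submodule.subset_span ⟨⟨k, hk⟩, rfl⟩
      · push_neg at hk
        have h := hz ((X : Polynomial B) ^ (k - n) • m₀)
        rw [add_smul, Finset.sum_smul] at h
        have hhead2 : (X : Polynomial B) ^ n • ((X : Polynomial B) ^ (k - n) • m₀)
            = (X : Polynomial B) ^ k • m₀ := by
          rw [← mul_smul, ← pow_add]
          congr 2
          omega
        have hterm2 : ∀ j : Fin n, (C (algebraMap A B (z j)) * X ^ (j : ℕ))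
            • ((X : Polynomial B) ^ (k - n) • m₀)
            = algebraMap A B (z j) • ((X : Polynomial B) ^ ((j : ℕ) + (k - n)) • m₀) := by
          intro j
          rw [mul_smul, ← mul_smul ((X : Polynomial B) ^ (j : ℕ)), ← pow_add, ← hbc]
        rw [hhead2, Finset.sum_congr rfl (fun j _ => hterm2 j)] at h
        rw [eq_neg_of_add_eq_zero_left h]
        refine Submodule.neg_mem _ (Submodule.sum_mem _ fun j _ => Submodule.smul_mem _ _ ?_)
        refine ih _ ?_
        have := j.isLt
        omega
  have hspan : Submodule.span B
      (Set.range fun i : Fin n => (X : Polynomial B) ^ (i : ℕ) • m₀) = ⊤ := by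
    rw [eq_top_iff]
    rintro m -
    obtain ⟨f, rfl⟩ := Submodule.Quotient.mk_surjective N m
    rw [hmk f]
    induction f using Polynomial.induction_on' with
    | add p q hp hq => rw [add_smul]; exact Submodule.add_mem _ hp hq
    | monomial k c =>
      rw [← C_mul_X_pow_eq_monomial, mul_smul, ← hbc]
      exact Submodule.smul_mem _ _ (hgenspan k)
  haveI hfin : Module.Finite B (Polynomial B ⧸ N) :=
    ⟨⟨Finset.univ.image (fun i : Fin n => (X : Polynomial B) ^ (i : ℕ) • m₀), by
      rw [Finset.coe_image, Finset.coe_univ, Set.image_univ]; exact hspan⟩⟩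
  haveI : IsNoetherian B (Polynomial B ⧸ N) :=
    isNoetherian_of_isNoetherianRing_of_finite B (Polynomial B ⧸ N)
  haveI : Nontrivial (Polynomial B ⧸ N) := IsSimpleModule.nontrivial (Polynomial B) _
  obtain ⟨N', hN'ne, hN'max⟩ :=
    set_has_maximal_iff_noetherian.mpr (inferInstance : IsNoetherian B (Polynomial B ⧸ N))
      {W : Submodule B (Polynomial B ⧸ N) | W ≠ ⊤} ⟨⊥, bot_ne_top⟩
  have hcoatom : IsCoatom N' := by
    constructor
    · exact hN'ne
    · intro W hW
      by_contra hWne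
      exact hN'max W hWne hW
  haveI hsimple' : IsSimpleModule B ((Polynomial B ⧸ N) ⧸ N') :=
    isSimpleModule_iff_isCoatom.2 hcoatom
  let Q : TwoSidedIdeal B := TwoSidedIdeal.mk'
    {x | ∀ m' : (Polynomial B ⧸ N) ⧸ N', x • m' = 0}
    (fun m' => zero_smul B m')
    (fun {x y} hx hy m' => by rw [add_smul, hx m', hy m', add_zero])
    (fun {x} hx m' => by rw [neg_smul, hx m', neg_zero])
    (fun {x y} hy m' => by rw [mul_smul, hy m', smul_zero])
    (fun {x y} hx m' => by rw [mul_smul]; exact hx _)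
  have hmemQ : ∀ x : B, x ∈ Q ↔ ∀ m' : (Polynomial B ⧸ N) ⧸ N', x • m' = 0 := fun x =>
    TwoSidedIdeal.mem_mk' _ _ _ _ _ _ x
  have hQprim : Q.IsPrimitiveIdeal :=
    ⟨(Polynomial B ⧸ N) ⧸ N', inferInstance, inferInstance, hsimple', hmemQ⟩
  have hPQ : P ≤ Q := by
    intro p hp
    have hp' : p ∈ P := hp
    refine (hmemQ p).2 ?_
    intro m'
    obtain ⟨m, rfl⟩ := Submodule.Quotient.mk_surjective N' m'
    rw [← Submodule.Quotient.mk_smul, hPkill p hp' m, Submodule.Quotient.mk_zero]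
  have haQ := (hmemQ a).1 (hprim Q hQprim hPQ)
  have haN' : ∀ m : Polynomial B ⧸ N, a • m ∈ N' := by
    intro m
    have := haQ (Submodule.Quotient.mk m)
    rwa [← Submodule.Quotient.mk_smul, Submodule.Quotient.mk_eq_zero] at this
  have hgenN' : ∀ i : Fin n, (X : Polynomial B) ^ (i : ℕ) • m₀ ∈ N' := by
    intro i
    rw [claimB (i : ℕ)]
    refine Submodule.neg_mem _ (Submodule.sum_mem _ fun j _ => ?_)
    have hexp : n - (j : ℕ) - 1 + 1 = n - (j : ℕ) := by
      have := j.isLt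
      omega
    have hsplit : (algebraMap A B (z j) * a ^ (n - (j : ℕ)))
        • ((X : Polynomial B) ^ (i : ℕ) • m₀)
        = (algebraMap A B (z j) * a ^ (n - (j : ℕ) - 1))
          • (a • ((X : Polynomial B) ^ (i : ℕ) • m₀)) := by
      conv_rhs => rw [← mul_smul, mul_assoc, ← pow_succ, hexp]
    rw [hsplit]
    exact Submodule.smul_mem _ _ (haN' _)
  have htople : (⊤ : Submodule B (Polynomial B ⧸ N)) ≤ N' := by
    rw [← hspan]
    refine Submodule.span_le.2 ?_
    rintro _ ⟨i, rfl⟩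
    exact hgenN' i
  exact hcoatom.1 (top_le_iff.1 htople)


end JacobsonCondE

/-- Let `A` be a commutative ring and `B` a left noetherian `A`-algebra satisfying
condition (E): for every simple left `B[X]`-module `M`, the endomorphism `φ(m) = X • m`
is integral over `A`.  Then `B` is a Jacobson ring: every semiprime two-sided ideal of
`B` is an intersection of primitive ideals. -/
theorem jacobson_ring_of_condition_E (A B : Type) [CommRing A] [Ring B] [Algebra A B]
    [IsNoetherianRing B]
    (hE : ∀ (M : Type) [AddCommGroup M] [Module (Polynomial B) M],
      IsSimpleModule (Polynomial B) M →
      ∃ n : ℕ, 1 ≤ n ∧ ∃ z : Fin n → A, ∀ m : M,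
        ((X : Polynomial B) ^ n
          + ∑ i : Fin n, C (algebraMap A B (z i)) * X ^ (i : ℕ)) • m = 0) :
    ∀ I : TwoSidedIdeal B, I.IsSemiprimeIdeal →
      ∃ S : Set (TwoSidedIdeal B), (∀ P ∈ S, P.IsPrimitiveIdeal) ∧ I = sInf S := by
  intro I hI
  refine ⟨{Q | Q.IsPrimitiveIdeal ∧ I ≤ Q}, fun Q hQ => hQ.1, ?_⟩
  refine le_antisymm (le_sInf fun Q hQ => hQ.2) ?_
  conv_rhs => rw [hI]
  refine le_sInf ?_
  rintro P ⟨hPprime, hIP⟩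
  intro x hx
  have hx' : x ∈ sInf {Q : TwoSidedIdeal B | Q.IsPrimitiveIdeal ∧ I ≤ Q} := hx
  show x ∈ P
  by_contra hxP
  have hxK : x ∈ sInf {Q : TwoSidedIdeal B | Q.IsPrimitiveIdeal ∧ P ≤ Q} :=
    (TwoSidedIdeal.mem_sInf B).2 fun Q hQ =>
      (TwoSidedIdeal.mem_sInf B).1 hx' Q ⟨hQ.1, le_trans hIP hQ.2⟩
  obtain ⟨a, haK, hapow⟩ := JacobsonCondE.step1 P _ hPprime x hxK hxP
  exact JacobsonCondE.step2 hE P a hapow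
    (fun Q h1 h2 => (TwoSidedIdeal.mem_sInf B).1 haK Q ⟨h1, h2⟩)
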